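/- For all real numbers α, β with 0 ≤ β < α ≤ 1, the sequence c_m = Σ_{i=0}^{m} α^{m−i} r_{m−i} r_i β^i is monotonically non-increasing: c_{m+1} ≤ c_m for every m ≥ 0. -/

import Mathlib

open Finset

/-- `r_m = (1/4^m)·C(2m,m)`. -/
noncomputable def rCoef (m : ℕ) : ℝ := (1 / 4 ^ m) * (Nat.choose (2 * m) m : ℝ)

/-- `c_m = Σ_{i=0}^{m} α^{m−i} r_{m−i} r_i β^i`. -/
noncomputable def cCoef (α β : ℝ) (m : ℕ) : ℝ :=
  ∑ i ∈ Finset.range (m + 1), α ^ (m - i) * rCoef (m - i) * rCoef i * β ^ i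

lemma rCoef_nonneg (m : ℕ) : 0 ≤ rCoef m := by
  unfold rCoef; positivity

lemma rCoef_rec (k : ℕ) : 2 * ((k : ℝ) + 1) * rCoef (k + 1) = (2 * k + 1) * rCoef k := by
  have h := Nat.succ_mul_centralBinom_succ k
  have h' : ((k : ℝ) + 1) * (Nat.choose (2 * (k + 1)) (k + 1) : ℝ)
      = 2 * (2 * k + 1) * (Nat.choose (2 * k) k : ℝ) := by exact_mod_cast congrArg Nat.cast h
  unfold rCoef
  have h4 : (4 : ℝ) ^ k ≠ 0 := by positivity
  rw [pow_succ]
  field_simp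
  linear_combination 2 * h'

/-- the sequence `c_m` is monotonically non-increasing. -/
theorem cCoef_antitone (α β : ℝ) (hβ : 0 ≤ β) (hβα : β < α) (hα : α ≤ 1) :
    ∀ m : ℕ, cCoef α β (m + 1) ≤ cCoef α β m := by
  intro m
  have hα0 : 0 < α := lt_of_le_of_lt hβ hβα
  have hβ1 : β ≤ 1 := le_of_lt (lt_of_lt_of_le hβα hα)
  -- T i : terms of c_m
  set T : ℕ → ℝ := fun i => α ^ (m - i) * rCoef (m - i) * rCoef i * β ^ i with hT
  -- U i : terms of c_{m+1}
  set U : ℕ → ℝ := fun i => α ^ (m + 1 - i) * rCoef (m + 1 - i) * rCoef i * β ^ i with hU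
  have S1 : ∑ i ∈ range (m + 2), 2 * ((m + 1 - i : ℕ) : ℝ) * U i
      = ∑ i ∈ range (m + 1), α * (2 * ((m - i : ℕ) : ℝ) + 1) * T i := by
    rw [Finset.sum_range_succ]
    have hz : 2 * ((m + 1 - (m + 1) : ℕ) : ℝ) * U (m + 1) = 0 := by
      simp
    rw [hz, add_zero]
    refine Finset.sum_congr rfl fun i hi => ?_
    have him : i ≤ m := Nat.lt_succ_iff.mp (Finset.mem_range.mp hi)
    have h1 : m + 1 - i = (m - i) + 1 := by omega
    have h2 : ((m + 1 - i : ℕ) : ℝ) = ((m - i : ℕ) : ℝ) + 1 := by rw [h1]; push_cast; ring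
    simp only [hU, hT, h1, h2, pow_succ]
    have := rCoef_rec (m - i)
    push_cast
    linear_combination (α ^ (m - i) * α * rCoef i * β ^ i) * this
  have S2 : ∑ i ∈ range (m + 2), 2 * (i : ℝ) * U i
      = ∑ i ∈ range (m + 1), β * (2 * (i : ℝ) + 1) * T i := by
    rw [Finset.sum_range_succ' (fun i => 2 * (i : ℝ) * U i) (m + 1)]
    have hz : 2 * ((0 : ℕ) : ℝ) * U 0 = 0 := by simp
    rw [hz, add_zero]
    refine Finset.sum_congr rfl fun i hi => ?_
    have him : i ≤ m := Nat.lt_succ_iff.mp (Finset.mem_range.mp hi)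
    have h1 : m + 1 - (i + 1) = m - i := by omega
    simp only [hU, hT, h1, pow_succ]
    have := rCoef_rec i
    push_cast
    linear_combination (α ^ (m - i) * rCoef (m - i) * (β ^ i * β)) * this
  have key : 2 * ((m : ℝ) + 1) * cCoef α β (m + 1)
      = ∑ i ∈ range (m + 1), (α * (2 * ((m - i : ℕ) : ℝ) + 1) + β * (2 * (i : ℝ) + 1)) * T i := by
    have expand : 2 * ((m : ℝ) + 1) * cCoef α β (m + 1)
        = ∑ i ∈ range (m + 2), (2 * ((m + 1 - i : ℕ) : ℝ) * U i + 2 * (i : ℝ) * U i) := by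
      rw [cCoef, Finset.mul_sum]
      refine Finset.sum_congr rfl fun i hi => ?_
      have him : i ≤ m + 1 := Nat.lt_succ_iff.mp (Finset.mem_range.mp hi)
      have hc : ((m + 1 - i : ℕ) : ℝ) = ((m : ℝ) + 1) - (i : ℝ) := by
        have : (m + 1 - i : ℕ) = m + 1 - i := rfl
        push_cast [Nat.cast_sub him]
        ring
      rw [hc]
      simp only [hU]
      ring
    rw [expand, Finset.sum_add_distrib, S1, S2, ← Finset.sum_add_distrib]
    refine Finset.sum_congr rfl fun i hi => ?_
    ring
  have hTnn : ∀ i ∈ range (m + 1), 0 ≤ T i := by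
    intro i hi
    have := rCoef_nonneg (m - i)
    have := rCoef_nonneg i
    simp only [hT]
    positivity
  have bound : ∑ i ∈ range (m + 1), (α * (2 * ((m - i : ℕ) : ℝ) + 1) + β * (2 * (i : ℝ) + 1)) * T i
      ≤ ∑ i ∈ range (m + 1), (2 * ((m : ℝ) + 1)) * T i := by
    refine Finset.sum_le_sum fun i hi => ?_
    have him : i ≤ m := Nat.lt_succ_iff.mp (Finset.mem_range.mp hi)
    have hc : ((m - i : ℕ) : ℝ) = (m : ℝ) - (i : ℝ) := by
      push_cast [Nat.cast_sub him]; ring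
    have hTi := hTnn i hi
    have hmi : (0 : ℝ) ≤ (m : ℝ) - (i : ℝ) := by
      have : (i : ℝ) ≤ (m : ℝ) := by exact_mod_cast him
      linarith
    have h1 : α * (2 * ((m - i : ℕ) : ℝ) + 1) ≤ 2 * ((m : ℝ) - i) + 1 := by
      rw [hc]
      nlinarith
    have h2 : β * (2 * (i : ℝ) + 1) ≤ 2 * (i : ℝ) + 1 := by
      have : (0 : ℝ) ≤ (i : ℝ) := Nat.cast_nonneg i
      nlinarith
    have h3 : α * (2 * ((m - i : ℕ) : ℝ) + 1) + β * (2 * (i : ℝ) + 1) ≤ 2 * ((m : ℝ) + 1) := by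
      have := h1; have := h2; linarith
    exact mul_le_mul_of_nonneg_right h3 hTi
  have final : 2 * ((m : ℝ) + 1) * cCoef α β (m + 1) ≤ 2 * ((m : ℝ) + 1) * cCoef α β m := by
    rw [key]
    calc _ ≤ ∑ i ∈ range (m + 1), (2 * ((m : ℝ) + 1)) * T i := bound
    _ = 2 * ((m : ℝ) + 1) * cCoef α β m := by rw [cCoef, Finset.mul_sum]
  have hpos : (0 : ℝ) < 2 * ((m : ℝ) + 1) := by positivity
  exact le_of_mul_le_mul_left final hpos
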